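/- Let (Λ_n, Λ_{n+1}, p_n, m_n, 𝔰_n), n = 1, 2, 3, …, be a sequence of row-finite covering systems of k-graphs with no sources. Then there exists an n such that Λ_n contains a cycle with an entrance if and only if every Λ_n contains a cycle with an entrance. -/
import Mathlib


/-- A `k`-graph: a countable small category equipped with a degree functor
`d : Λ → ℕ^k` satisfying the unique factorisation property. -/
structure KGraph (k : ℕ) where
  V : Type
  E : Type
  countable_V : Countable V
  countable_E : Countable E
  r : E → V
  s : E → V
  ident : V → E
  comp : (μ ν : E) → s μ = r ν → E
  d : E → Fin k → ℕ
  r_ident : ∀ v, r (ident v) = v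
  s_ident : ∀ v, s (ident v) = v
  r_comp : ∀ μ ν h, r (comp μ ν h) = r μ
  s_comp : ∀ μ ν h, s (comp μ ν h) = s ν
  ident_comp : ∀ (v ν) (h : s (ident v) = r ν), comp (ident v) ν h = ν
  comp_ident : ∀ (μ v) (h : s μ = r (ident v)), comp μ (ident v) h = μ
  comp_assoc : ∀ (μ ν ρ) (h₁ : s μ = r ν) (h₂ : s ν = r ρ),
    comp (comp μ ν h₁) ρ ((s_comp μ ν h₁).trans h₂) =
      comp μ (comp ν ρ h₂) (h₁.trans (r_comp ν ρ h₂).symm)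
  d_ident : ∀ v, d (ident v) = 0
  d_comp : ∀ μ ν h, d (comp μ ν h) = d μ + d ν
  factor : ∀ (lam : E) (m n : Fin k → ℕ), d lam = m + n →
    ∃! μν : E × E, ∃ h : s μν.1 = r μν.2,
      d μν.1 = m ∧ d μν.2 = n ∧ comp μν.1 μν.2 h = lam

namespace KGraph

variable {k : ℕ}

/-- A `k`-graph is row-finite if `vΛⁿ` is finite for every vertex `v` and `n ∈ ℕ^k`. -/
def RowFinite (Λ : KGraph k) : Prop :=
  ∀ (v : Λ.V) (n : Fin k → ℕ), {e : Λ.E | Λ.r e = v ∧ Λ.d e = n}.Finite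

/-- A `k`-graph has no sources if `vΛⁿ` is nonempty for every `v` and `n`. -/
def NoSources (Λ : KGraph k) : Prop :=
  ∀ (v : Λ.V) (n : Fin k → ℕ), ∃ e : Λ.E, Λ.r e = v ∧ Λ.d e = n

/-- A `k`-graph is locally convex if whenever `i < j`, `e ∈ Λ^{e_i}`, `f ∈ Λ^{e_j}`
and `r e = r f`, both `e` and `f` extend to paths of degree `e_i + e_j`. -/
def LocallyConvex (Λ : KGraph k) : Prop :=
  ∀ (i j : Fin k), i < j → ∀ (e f : Λ.E),
    Λ.d e = Pi.single i 1 → Λ.d f = Pi.single j 1 → Λ.r e = Λ.r f →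
    (∃ (e' : Λ.E) (_ : Λ.s e = Λ.r e'), Λ.d e' = Pi.single j 1) ∧
    (∃ (f' : Λ.E) (_ : Λ.s f = Λ.r f'), Λ.d f' = Pi.single i 1)

/-- A morphism of `k`-graphs: a degree-preserving functor. -/
structure Hom (Λ Γ : KGraph k) where
  vmap : Λ.V → Γ.V
  emap : Λ.E → Γ.E
  map_r : ∀ e, Γ.r (emap e) = vmap (Λ.r e)
  map_s : ∀ e, Γ.s (emap e) = vmap (Λ.s e)
  map_ident : ∀ v, emap (Λ.ident v) = Γ.ident (vmap v)
  map_comp : ∀ (μ ν) (h : Λ.s μ = Λ.r ν),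
    emap (Λ.comp μ ν h) = Γ.comp (emap μ) (emap ν) (by rw [map_s, map_r, h])
  map_d : ∀ e, Γ.d (emap e) = Λ.d e

/-- A covering of the `k`-graph `Λ` by `Γ`: a surjective morphism `p : Γ → Λ` which is
bijective on the source-fibres and range-fibres at each vertex of `Γ`. -/
structure IsCovering {Λ Γ : KGraph k} (p : Hom Γ Λ) : Prop where
  surj_v : Function.Surjective p.vmap
  surj_e : Function.Surjective p.emap
  bij_s : ∀ v : Γ.V, Set.BijOn p.emap {e : Γ.E | Γ.s e = v} {e : Λ.E | Λ.s e = p.vmap v}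
  bij_r : ∀ v : Γ.V, Set.BijOn p.emap {e : Γ.E | Γ.r e = v} {e : Λ.E | Λ.r e = p.vmap v}

/-- A covering is finite if the fibre over each vertex is finite. -/
def FiniteCovering {Λ Γ : KGraph k} (p : Hom Γ Λ) : Prop :=
  ∀ v : Λ.V, {w : Γ.V | p.vmap w = v}.Finite

/-- A cocycle `𝔰 : Γ → S_m` on a `k`-graph: a functor into the permutation group. -/
def IsCocycle {Γ : KGraph k} {m : ℕ} (σ : Γ.E → Equiv.Perm (Fin m)) : Prop :=
  ∀ (μ ν : Γ.E) (h : Γ.s μ = Γ.r ν), σ (Γ.comp μ ν h) = σ μ * σ ν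

/-- A cycle with an entrance: `λ` with `s λ = r λ` together with `μ ∈ r(λ)Λ` with
`d μ ≤ d λ` such that `μ` is not the initial segment `λ(0, d μ)` of `λ`. -/
def HasCycleWithEntrance (Λ : KGraph k) : Prop :=
  ∃ (lam mu : Λ.E), Λ.s lam = Λ.r lam ∧ Λ.r mu = Λ.r lam ∧ Λ.d mu ≤ Λ.d lam ∧
    ¬ ∃ (ρ : Λ.E) (h : Λ.s mu = Λ.r ρ), Λ.comp mu ρ h = lam

end KGraph

section Aux

variable {k : ℕ}

lemma KGraph.comp_congr {Λ : KGraph k} {a a' b b' : Λ.E} (ha : a = a') (hb : b = b')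
    {h : Λ.s a = Λ.r b} (h' : Λ.s a' = Λ.r b') : Λ.comp a b h = Λ.comp a' b' h' := by
  subst ha; subst hb; rfl

/-- Peel lemma: if `mu` does not compose to `X`, with `d mu ≤ d X`, then `mu`
does not compose to `X · y` either. -/
lemma KGraph.peel {Λ : KGraph k} {mu X y : Λ.E} (hd : Λ.d mu ≤ Λ.d X)
    (h : Λ.s X = Λ.r y) (hne : ¬ ∃ (ρ : Λ.E) (h' : Λ.s mu = Λ.r ρ), Λ.comp mu ρ h' = X) :
    ¬ ∃ (ρ : Λ.E) (h' : Λ.s mu = Λ.r ρ), Λ.comp mu ρ h' = Λ.comp X y h := by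
  rintro ⟨ρ, hρ, hc⟩
  obtain ⟨z, ⟨hz, hz1, hz2, hz3⟩, -⟩ :=
    Λ.factor X (Λ.d mu) (Λ.d X - Λ.d mu)
      (funext fun i => by have := Pi.le_def.mp hd i; simp only [Pi.add_apply, Pi.sub_apply]; omega)
  obtain ⟨u, -, huniq⟩ := Λ.factor (Λ.comp X y h) (Λ.d mu) (Λ.d ρ)
    (by rw [← hc, Λ.d_comp])
  have hsz2 : Λ.s z.2 = Λ.s X := by rw [← hz3, Λ.s_comp]
  have hcomp2 : Λ.comp z.1 (Λ.comp z.2 y (hsz2.trans h)) (hz.trans (Λ.r_comp _ _ _).symm)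
      = Λ.comp X y h := by
    rw [← Λ.comp_assoc z.1 z.2 y hz (hsz2.trans h)]
    exact KGraph.comp_congr hz3 rfl h
  have hd2 : Λ.d (Λ.comp z.2 y (hsz2.trans h)) = Λ.d ρ := by
    have e1 : Λ.d (Λ.comp X y h) = Λ.d mu + Λ.d ρ := by rw [← hc, Λ.d_comp]
    have e2 : Λ.d (Λ.comp X y h) = Λ.d mu + Λ.d (Λ.comp z.2 y (hsz2.trans h)) := by
      rw [← hcomp2, Λ.d_comp, hz1]
    exact add_left_cancel (e2.symm.trans e1)
  have e1 := huniq (mu, ρ) ⟨hρ, rfl, rfl, hc⟩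
  have e2 := huniq (z.1, Λ.comp z.2 y (hsz2.trans h))
    ⟨hz.trans (Λ.r_comp _ _ _).symm, hz1, hd2, hcomp2⟩
  have emu : mu = z.1 := congrArg Prod.fst (e1.trans e2.symm)
  refine hne ⟨z.2, emu ▸ hz, ?_⟩
  rw [KGraph.comp_congr emu rfl hz]
  exact hz3

/-- Powers of a cycle, bundled with range/source/degree facts. -/
def KGraph.pow (Λ : KGraph k) (lam : Λ.E) (hcyc : Λ.s lam = Λ.r lam) :
    ℕ → {e : Λ.E // Λ.r e = Λ.r lam ∧ Λ.s e = Λ.r lam ∧ Λ.d lam ≤ Λ.d e}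
  | 0 => ⟨lam, rfl, hcyc, le_refl _⟩
  | n + 1 =>
    let P := Λ.pow lam hcyc n
    ⟨Λ.comp P.1 lam P.2.2.1,
      by rw [Λ.r_comp]; exact P.2.1,
      by rw [Λ.s_comp]; exact hcyc,
      by rw [Λ.d_comp]; intro i; exact Nat.le_add_left _ _⟩

lemma KGraph.entrance_pow {Λ : KGraph k} {lam mu : Λ.E} (hcyc : Λ.s lam = Λ.r lam)
    (hd : Λ.d mu ≤ Λ.d lam)
    (hne : ¬ ∃ (ρ : Λ.E) (h : Λ.s mu = Λ.r ρ), Λ.comp mu ρ h = lam) (n : ℕ) :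
    ¬ ∃ (ρ : Λ.E) (h : Λ.s mu = Λ.r ρ), Λ.comp mu ρ h = (Λ.pow lam hcyc n).1 := by
  induction n with
  | zero => exact hne
  | succ n ih =>
      exact KGraph.peel (le_trans hd (Λ.pow lam hcyc n).2.2.2) _ ih

/-- Pushing a cycle with an entrance down along a covering. -/
lemma KGraph.pushdown {Γ Λ : KGraph k} (p : KGraph.Hom Γ Λ) (hp : KGraph.IsCovering p)
    (h : Γ.HasCycleWithEntrance) : Λ.HasCycleWithEntrance := by
  obtain ⟨lam, mu, hcyc, hr, hd, hne⟩ := h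
  refine ⟨p.emap lam, p.emap mu, ?_, ?_, ?_, ?_⟩
  · rw [p.map_s, p.map_r, hcyc]
  · rw [p.map_r, p.map_r, hr]
  · rw [p.map_d, p.map_d]; exact hd
  · rintro ⟨ρ, hρ, hc⟩
    have hρ' : ρ ∈ {e : Λ.E | Λ.r e = p.vmap (Γ.s mu)} := by
      simp only [Set.mem_setOf_eq, ← p.map_s]; exact hρ.symm
    obtain ⟨ρ', hρ'mem, hρ'eq⟩ := (hp.bij_r (Γ.s mu)).surjOn hρ'
    have hcc : Γ.s mu = Γ.r ρ' := hρ'mem.symm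
    have key : p.emap (Γ.comp mu ρ' hcc) = p.emap lam := by
      rw [p.map_comp]
      rw [KGraph.comp_congr (rfl : p.emap mu = p.emap mu) hρ'eq hρ]
      exact hc
    have hmem1 : Γ.comp mu ρ' hcc ∈ {e : Γ.E | Γ.r e = Γ.r lam} := by
      simp only [Set.mem_setOf_eq, Γ.r_comp]; exact hr
    have hmem2 : lam ∈ {e : Γ.E | Γ.r e = Γ.r lam} := rfl
    have := (hp.bij_r (Γ.r lam)).injOn hmem1 hmem2 key
    exact hne ⟨ρ', hcc, this⟩

/-- Iterated lifts of a cycle along a covering. -/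
noncomputable def KGraph.pathFn {Γ Λ : KGraph k} (p : KGraph.Hom Γ Λ)
    (lam : Λ.E) (hcyc : Λ.s lam = Λ.r lam)
    (L : (x : {w : Γ.V // p.vmap w = Λ.r lam}) → Γ.E)
    (hLr : ∀ x, Γ.r (L x) = x.1) (hLp : ∀ x, p.emap (L x) = lam)
    (F : {w : Γ.V // p.vmap w = Λ.r lam} → {w : Γ.V // p.vmap w = Λ.r lam})
    (hF : ∀ x, (F x).1 = Γ.s (L x)) :
    (n : ℕ) → (x : {w : Γ.V // p.vmap w = Λ.r lam}) →
      {e : Γ.E // Γ.r e = x.1 ∧ Γ.s e = (F^[n + 1] x).1 ∧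
        p.emap e = (Λ.pow lam hcyc n).1}
  | 0, x => ⟨L x, hLr x, by rw [Function.iterate_one]; exact (hF x).symm, hLp x⟩
  | n + 1, x =>
    let P := KGraph.pathFn p lam hcyc L hLr hLp F hF n x
    let y := F^[n + 1] x
    ⟨Γ.comp P.1 (L y) (P.2.2.1.trans (hLr y).symm),
      by rw [Γ.r_comp]; exact P.2.1,
      by rw [Γ.s_comp, ← hF y]; exact congrArg Subtype.val (Function.iterate_succ_apply' F (n+1) x).symm,
      by
        rw [p.map_comp]
        show _ = (Λ.pow lam hcyc (n+1)).1
        simp only [KGraph.pow]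
        exact KGraph.comp_congr P.2.2.2 (hLp y) _⟩

/-- Lifting a cycle with an entrance along a finite covering. -/
lemma KGraph.lift_cwe {Γ Λ : KGraph k} (p : KGraph.Hom Γ Λ) (hp : KGraph.IsCovering p)
    (hfin : KGraph.FiniteCovering p) (h : Λ.HasCycleWithEntrance) :
    Γ.HasCycleWithEntrance := by
  obtain ⟨lam, mu, hcyc, hr, hd, hne⟩ := h
  have hlift : ∀ x : {w : Γ.V // p.vmap w = Λ.r lam},
      ∃ e, Γ.r e = x.1 ∧ p.emap e = lam := by
    intro x
    have hmem : lam ∈ {e : Λ.E | Λ.r e = p.vmap x.1} := by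
      simp only [Set.mem_setOf_eq, x.2]
    obtain ⟨e, he, hpe⟩ := (hp.bij_r x.1).surjOn hmem
    exact ⟨e, he, hpe⟩
  choose L hLr hLp using hlift
  have hFmem : ∀ x, p.vmap (Γ.s (L x)) = Λ.r lam := fun x => by
    rw [← p.map_s, hLp, hcyc]
  set F : {w : Γ.V // p.vmap w = Λ.r lam} → {w : Γ.V // p.vmap w = Λ.r lam} :=
    fun x => ⟨Γ.s (L x), hFmem x⟩ with hFdef
  have hF : ∀ x, (F x).1 = Γ.s (L x) := fun x => rfl
  obtain ⟨w0, hw0⟩ := hp.surj_v (Λ.r lam)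
  have hfib : Finite {w : Γ.V // p.vmap w = Λ.r lam} := (hfin (Λ.r lam)).to_subtype
  obtain ⟨i0, j0, hij0, hW0⟩ :=
    Finite.exists_ne_map_eq_of_infinite (fun n : ℕ => F^[n] (⟨w0, hw0⟩ : {w // p.vmap w = Λ.r lam}))
  obtain ⟨i, j, hij, hW⟩ : ∃ i j, i < j ∧ F^[i] ⟨w0, hw0⟩ = F^[j] ⟨w0, hw0⟩ := by
    rcases lt_or_gt_of_ne hij0 with h' | h'
    · exact ⟨i0, j0, h', hW0⟩
    · exact ⟨j0, i0, h', hW0.symm⟩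
  set x : {w : Γ.V // p.vmap w = Λ.r lam} := F^[i] ⟨w0, hw0⟩ with hxdef
  set N := j - i - 1 with hNdef
  have hiter : F^[N + 1] x = x := by
    rw [hxdef, ← Function.iterate_add_apply]
    have : N + 1 + i = j := by omega
    rw [this, ← hW]
  set c := KGraph.pathFn p lam hcyc L hLr hLp F hF N x with hcdef
  -- lift mu at x
  have hmumem : mu ∈ {e : Λ.E | Λ.r e = p.vmap x.1} := by
    simp only [Set.mem_setOf_eq, x.2]; exact hr
  obtain ⟨mu', hmu'r, hmu'p⟩ := (hp.bij_r x.1).surjOn hmumem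
  refine ⟨c.1, mu', ?_, ?_, ?_, ?_⟩
  · exact c.2.2.1.trans ((congrArg Subtype.val hiter).trans c.2.1.symm)
  · exact (show Γ.r mu' = x.1 from hmu'r).trans c.2.1.symm
  · have h1 : Γ.d mu' = Λ.d mu := by rw [← p.map_d, hmu'p]
    have h2 : Γ.d c.1 = Λ.d (Λ.pow lam hcyc N).1 := by rw [← p.map_d, c.2.2.2]
    rw [h1, h2]
    exact le_trans hd (Λ.pow lam hcyc N).2.2.2
  · rintro ⟨ρ, hρ, hc⟩
    have hcc : Λ.s mu = Λ.r (p.emap ρ) := by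
      rw [← hmu'p, p.map_s, p.map_r, hρ]
    refine KGraph.entrance_pow hcyc hd hne N ⟨p.emap ρ, hcc, ?_⟩
    have : p.emap (Γ.comp mu' ρ hρ) = (Λ.pow lam hcyc N).1 := by
      rw [hc]; exact c.2.2.2
    rw [← this, p.map_comp]
    exact KGraph.comp_congr hmu'p.symm rfl _

end Aux

/-- for a sequence `(Λ_n, Λ_{n+1}, p_n, m_n, 𝔰_n)` of row-finite covering
systems of `k`-graphs with no sources, some `Λ_n` contains a cycle with an entrance if
and only if every `Λ_n` contains a cycle with an entrance. -/
theorem cycle_with_entrance_tower (k : ℕ) (Λ : ℕ → KGraph k)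
    (p : ∀ n : ℕ, KGraph.Hom (Λ (n + 1)) (Λ n))
    (hcov : ∀ n, KGraph.IsCovering (p n))
    (hfin : ∀ n, KGraph.FiniteCovering (p n))
    (hrow : ∀ n, (Λ n).RowFinite)
    (hns : ∀ n, (Λ n).NoSources)
    (m : ℕ → ℕ) (hm : ∀ n, 0 < m n)
    (σ : ∀ n : ℕ, (Λ (n + 1)).E → Equiv.Perm (Fin (m n)))
    (hσ : ∀ n, KGraph.IsCocycle (σ n)) :
    (∃ n, KGraph.HasCycleWithEntrance (Λ n)) ↔
      (∀ n, KGraph.HasCycleWithEntrance (Λ n)) := by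
  constructor
  · rintro ⟨n, hn⟩
    have h0 : KGraph.HasCycleWithEntrance (Λ 0) := by
      clear hσ σ hm m hns hrow
      induction n with
      | zero => exact hn
      | succ n ih => exact ih (KGraph.pushdown (p n) (hcov n) hn)
    intro m'
    clear hn
    induction m' with
    | zero => exact h0
    | succ m' ih => exact KGraph.lift_cwe (p m') (hcov m') (hfin m') ih
  · intro h
    exact ⟨0, h 0⟩
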